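/- Let n and d be real numbers with n ≥ d ≥ 1. Then for every real η > 0: max( (n·d/16) · tanh(η·d/8), min( d·log 2 / (12·η), n·d/12 ) ) ≥ 0.01 · d^(3/2) · √n. -/
import Mathlib

lemma tanh_lb (x : ℝ) (hx : 0 ≤ x) : x / (1 + x) ≤ Real.tanh x := by
  rw [Real.tanh_eq_sinh_div_cosh, Real.sinh_eq, Real.cosh_eq]
  have hE : Real.exp (-x) * Real.exp x = 1 := by
    rw [← Real.exp_add]; simp
  have h1 : 0 < Real.exp x := Real.exp_pos x
  have h2 : 0 < Real.exp (-x) := Real.exp_pos (-x)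
  have h3 : 2 * x + 1 ≤ Real.exp (2 * x) := Real.add_one_le_exp (2 * x)
  have h4 : Real.exp (2 * x) = Real.exp x * Real.exp x := by
    rw [← Real.exp_add]; ring_nf
  rw [div_le_div_iff₀ (by positivity) (by positivity)]
  nlinarith [mul_pos h1 h2, mul_nonneg hx h2.le, mul_nonneg (mul_nonneg hx h2.le) h2.le]

theorem stmt_16 (n d : ℝ) (hd : 1 ≤ d) (hnd : d ≤ n) (η : ℝ) (hη : 0 < η) :
    max ((n * d / 16) * Real.tanh (η * d / 8))
        (min (d * Real.log 2 / (12 * η)) (n * d / 12)) ≥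
      0.01 * d ^ ((3 : ℝ) / 2) * Real.sqrt n := by
  have hd0 : (0:ℝ) ≤ d := by linarith
  have hn0 : (0:ℝ) ≤ n := by linarith
  set a := Real.sqrt d with ha
  set b := Real.sqrt n with hb
  have ha2 : a ^ 2 = d := Real.sq_sqrt hd0
  have hb2 : b ^ 2 = n := Real.sq_sqrt hn0
  have ha1 : 1 ≤ a := by
    rw [show (1:ℝ) = Real.sqrt 1 by simp]; exact Real.sqrt_le_sqrt hd
  have hab : a ≤ b := Real.sqrt_le_sqrt hnd
  have hd32 : d ^ ((3:ℝ)/2) = a ^ 3 := by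
    rw [ha, Real.sqrt_eq_rpow, ← Real.rpow_natCast (d ^ ((1:ℝ)/2)) 3,
      ← Real.rpow_mul hd0]
    norm_num
  rw [hd32]
  have hL1 : 0.6931 < Real.log 2 := by
    have := Real.log_two_gt_d9; linarith
  have hL2 : Real.log 2 < 0.6932 := by
    have := Real.log_two_lt_d9; linarith
  have hb1 : (1:ℝ) ≤ b := le_trans ha1 hab
  by_cases hc : η ≤ Real.log 2 / (0.12 * (a * b))
  · -- small η : use the min branch
    apply le_trans _ (le_max_right _ _)
    rw [le_min_iff]
    constructor
    · rw [le_div_iff₀ (by positivity)]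
      have hc' : η * (0.12 * (a * b)) ≤ Real.log 2 := by
        rw [← le_div_iff₀ (by positivity)]; exact hc
      nlinarith [sq_nonneg a, mul_pos hη (by positivity : (0:ℝ) < a * b),
        mul_le_mul_of_nonneg_right hc' (sq_nonneg a)]
    · nlinarith [ha2, hb2, mul_le_mul_of_nonneg_left hab
        (by positivity : (0:ℝ) ≤ a ^ 2 * b)]
  · -- large η : use the tanh branch
    push_neg at hc
    apply le_trans _ (le_max_left _ _)
    set x := η * d / 8 with hx
    have hx0 : 0 ≤ x := by positivity
    have ht : x / (1 + x) ≤ Real.tanh x := tanh_lb x hx0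
    have key : 0.01 * a ^ 3 * b ≤ (n * d / 16) * (x / (1 + x)) := by
      have h1x : (0:ℝ) < 1 + x := by positivity
      have hrw : (n * d / 16) * (x / (1 + x)) = n * d * x / (16 * (1 + x)) := by
        field_simp
      rw [hrw, le_div_iff₀ (by positivity)]
      have hc' : Real.log 2 < η * (0.12 * (a * b)) := by
        rw [div_lt_iff₀ (by positivity)] at hc; linarith
      have hxa : Real.log 2 * a ^ 2 < x * (0.96 * (a * b)) := by
        have : x * (0.96 * (a * b)) = (η * (0.12 * (a * b))) * d := by
          rw [hx]; ring
        nlinarith [mul_lt_mul_of_pos_right hc' (by positivity : (0:ℝ) < a ^ 2)]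
      -- need: 0.01 a^3 b (1+x) ≤ (n d /16) x
      have hnd' : n * d = a ^ 2 * b ^ 2 := by rw [ha2, hb2]; ring
      have h1 := mul_lt_mul_of_pos_right hxa (by positivity : (0:ℝ) < a * b)
      have h2 := mul_le_mul_of_nonneg_left hab
        (by positivity : (0:ℝ) ≤ 0.16 * x * a ^ 2 * b)
      have h3 := mul_le_mul_of_nonneg_right hL1.le
        (by positivity : (0:ℝ) ≤ a ^ 3 * b)
      nlinarith [h1, h2, h3, (by positivity : (0:ℝ) ≤ a ^ 3 * b)]
    calc 0.01 * a ^ 3 * b ≤ (n * d / 16) * (x / (1 + x)) := key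
      _ ≤ (n * d / 16) * Real.tanh x :=
        mul_le_mul_of_nonneg_left ht (by positivity)
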